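/- Let π: X → B be a rational elliptic surface over a number field k with zero section over k, and let F be a fiber of type I_n* with n ≥ 1 that is the unique fiber of its type. Then the near components Θ₀, Θ₁ and all multiplicity-2 components of F are defined over k, while the two far components Θ₂, Θ₃ are defined over an extension of k of degree at most 2. -/

import Mathlib

/-- The dual graph of a fiber of type `Iₙ*` (`n ≥ 1`, affine `D̃ₙ₊₄` diagram) together
with the zero section.  Vertices: `none` is the zero section `O`; `some i` is the
component `Θᵢ`.  The reduced near components `Θ₀, Θ₁` meet `Θ₄`, the reduced far
components `Θ₂, Θ₃` meet `Θₙ₊₄`, and `Θ₄, Θ₅, …, Θₙ₊₄` form the chain of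
multiplicity-2 components; `O` meets `Θ₀`. -/
def adjInStar (n : ℕ) : Option (Fin (n + 5)) → Option (Fin (n + 5)) → Prop :=
  fun a b =>
    match a, b with
    | none, none => False
    | none, some j => j.val = 0
    | some i, none => i.val = 0
    | some i, some j =>
        (i.val = 0 ∧ j.val = 4) ∨ (j.val = 0 ∧ i.val = 4) ∨
        (i.val = 1 ∧ j.val = 4) ∨ (j.val = 1 ∧ i.val = 4) ∨
        (i.val = 2 ∧ j.val = n + 4) ∨ (j.val = 2 ∧ i.val = n + 4) ∨
        (i.val = 3 ∧ j.val = n + 4) ∨ (j.val = 3 ∧ i.val = n + 4) ∨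
        (4 ≤ i.val ∧ j.val = i.val + 1) ∨ (4 ≤ j.val ∧ i.val = j.val + 1)

/-- Multiplicities of the components of an `Iₙ*` fiber: the components `Θᵢ` with
`i ≥ 4` have multiplicity `2`, the others (and the zero section) multiplicity `1`. -/
def multInStar (n : ℕ) : Option (Fin (n + 5)) → ℕ :=
  fun v => match v with
  | none => 1
  | some i => if 4 ≤ i.val then 2 else 1

/-- Let `π : X → B` be a rational elliptic surface over a number field
`k` with zero section over `k`, and `F` a fiber of type `Iₙ*`, `n ≥ 1`, which is the
unique fiber of its type.  The Galois group acts on the components and the zero section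
(fixing it) preserving intersections and multiplicities.  Then the near components
`Θ₀, Θ₁` and all multiplicity-2 components are defined over `k`, while the far
components `Θ₂, Θ₃` are defined over an extension of `k` of degree at most `2`
(their Galois orbits have at most 2 elements). -/
theorem InStar_components_fields_of_definition (n : ℕ) (hn : 1 ≤ n)
    {G : Type} [Group G]
    (ρ : G →* Equiv.Perm (Option (Fin (n + 5))))
    (hadj : ∀ (g : G) (a b : Option (Fin (n + 5))),
      adjInStar n (ρ g a) (ρ g b) ↔ adjInStar n a b)
    (hmult : ∀ (g : G) (v : Option (Fin (n + 5))), multInStar n (ρ g v) = multInStar n v)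
    (hO : ∀ g : G, ρ g none = none) :
    (∀ g : G, ρ g (some ⟨0, by omega⟩) = some ⟨0, by omega⟩) ∧
    (∀ g : G, ρ g (some ⟨1, by omega⟩) = some ⟨1, by omega⟩) ∧
    (∀ (g : G) (i : Fin (n + 5)), 4 ≤ i.val → ρ g (some i) = some i) ∧
    (∀ i : Fin (n + 5), i.val = 2 ∨ i.val = 3 →
      (Set.range fun g : G => ρ g (some i)).ncard ≤ 2) := by
  have hinj : ∀ g : G, Function.Injective (ρ g) := fun g => (ρ g).injective
  -- Θ₀ is fixed: it is the unique component meeting the zero section.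
  have h0 : ∀ g : G, ρ g (some ⟨0, by omega⟩) = some ⟨0, by omega⟩ := by
    intro g
    have ha : adjInStar n (ρ g (some ⟨0, by omega⟩)) none := by
      have := (hadj g (some ⟨0, by omega⟩) none).mpr (by simp [adjInStar])
      rwa [hO] at this
    rcases h : ρ g (some ⟨0, by omega⟩) with _ | j
    · rw [h] at ha; simp [adjInStar] at ha
    · rw [h] at ha; simp [adjInStar] at ha
      exact congrArg some (Fin.ext (by simpa using ha))
  -- The chain Θ₄, …, Θ_{n+4} is fixed pointwise.
  have hchain : ∀ g : G, ∀ m, ∀ hm : m ≤ n,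
      ρ g (some (⟨4 + m, by omega⟩ : Fin (n + 5))) = some ⟨4 + m, by omega⟩ := by
    intro g m
    induction m using Nat.strong_induction_on with
    | _ m IH =>
      intro hm
      have hm2 : multInStar n (ρ g (some ⟨4 + m, by omega⟩)) = 2 := by
        rw [hmult]; simp only [multInStar]; rw [if_pos (by simp)]
      rcases m with _ | m'
      · -- Θ₄: the unique multiplicity-2 component meeting Θ₀
        have ha : adjInStar n (ρ g (some ⟨4 + 0, by omega⟩)) (some (⟨0, by omega⟩ : Fin (n + 5))) := by
          have := (hadj g (some ⟨4 + 0, by omega⟩) (some ⟨0, by omega⟩)).mpr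
            (by simp [adjInStar])
          rwa [h0] at this
        rcases h : ρ g (some ⟨4 + 0, by omega⟩) with _ | j
        · rw [h] at hm2; simp [multInStar] at hm2
        · rw [h] at ha
          simp [adjInStar] at ha
          refine congrArg some (Fin.ext ?_)
          simp only [Fin.val_mk]
          omega
      · -- Θ_{4+m'+1}: multiplicity-2 neighbour of Θ_{4+m'} other than Θ_{4+m'-1}
        have hprev := IH m' (by omega) (by omega)
        have ha : adjInStar n (ρ g (some ⟨4 + (m' + 1), by omega⟩))
            (some (⟨4 + m', by omega⟩ : Fin (n + 5))) := by
          have := (hadj g (some ⟨4 + (m' + 1), by omega⟩) (some ⟨4 + m', by omega⟩)).mpr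
            (by simp only [adjInStar, Fin.val_mk]; omega)
          rwa [hprev] at this
        rcases h : ρ g (some ⟨4 + (m' + 1), by omega⟩) with _ | j
        · rw [h] at hm2; simp [multInStar] at hm2
        · rw [h] at ha hm2
          simp [adjInStar] at ha
          have hj4 : 4 ≤ j.val := by
            by_contra hc
            simp only [multInStar, if_neg hc] at hm2
            omega
          have hcand : (j.val = 3 + m' ∧ 1 ≤ m') ∨ j.val = 5 + m' := by
            simp only [Fin.ext_iff, Fin.val_zero] at ha
            omega
          rcases hcand with ⟨hc, hm1'⟩ | hc
          · exfalso
            obtain ⟨m'', rfl⟩ : ∃ m'', m' = m'' + 1 := ⟨m' - 1, by omega⟩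
            have hpp := IH m'' (by omega) (by omega)
            have hj : (some j : Option (Fin (n + 5))) = some ⟨4 + m'', by omega⟩ :=
              congrArg some (Fin.ext (by simp only [Fin.val_mk]; omega))
            have := hinj g (h.trans (hj.trans hpp.symm))
            simp only [Option.some.injEq, Fin.mk.injEq] at this
            omega
          · exact congrArg some (Fin.ext (by simp only [Fin.val_mk]; omega))
  -- All multiplicity-2 components (i.val ≥ 4) are fixed.
  have h2comp : ∀ (g : G) (i : Fin (n + 5)), 4 ≤ i.val → ρ g (some i) = some i := by
    intro g i hi
    have hi' : i = ⟨4 + (i.val - 4), by omega⟩ := Fin.ext (by simp only [Fin.val_mk]; omega)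
    rw [hi']
    exact hchain g (i.val - 4) (by omega)
  -- Θ₁ is fixed.
  have h1 : ∀ g : G, ρ g (some ⟨1, by omega⟩) = some ⟨1, by omega⟩ := by
    intro g
    have ha : adjInStar n (ρ g (some ⟨1, by omega⟩)) (some (⟨4, by omega⟩ : Fin (n + 5))) := by
      have := (hadj g (some ⟨1, by omega⟩) (some ⟨4, by omega⟩)).mpr (by simp [adjInStar])
      rwa [h2comp g ⟨4, by omega⟩ (le_refl 4)] at this
    have hm1 : multInStar n (ρ g (some ⟨1, by omega⟩)) = 1 := by
      rw [hmult]; simp only [multInStar]; rw [if_neg (by simp)]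
    rcases h : ρ g (some ⟨1, by omega⟩) with _ | j
    · exfalso
      have := hinj g (h.trans (hO g).symm)
      simp at this
    · rw [h] at ha hm1
      simp [adjInStar] at ha
      have hj4 : ¬ 4 ≤ j.val := by
        intro hc
        simp only [multInStar, if_pos hc] at hm1
        omega
      have hj01 : j.val = 0 ∨ j.val = 1 := by simp only [Fin.ext_iff, Fin.val_zero] at ha; omega
      rcases hj01 with hc | hc
      · exfalso
        have hj : (some j : Option (Fin (n + 5))) = some ⟨0, by omega⟩ :=
          congrArg some (Fin.ext (by simpa using hc))
        have := hinj g (h.trans (hj.trans (h0 g).symm))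
        simp at this
      · exact congrArg some (Fin.ext (by simpa using hc))
  refine ⟨h0, h1, h2comp, ?_⟩
  -- Far components: orbit contained in {Θ₂, Θ₃}.
  intro i hi
  have hsub : (Set.range fun g : G => ρ g (some i)) ⊆
      {some ⟨2, by omega⟩, some ⟨3, by omega⟩} := by
    rintro _ ⟨g, rfl⟩
    have hend : ρ g (some (⟨4 + n, by omega⟩ : Fin (n + 5))) = some ⟨4 + n, by omega⟩ :=
      hchain g n le_rfl
    have ha : adjInStar n (ρ g (some i)) (some (⟨4 + n, by omega⟩ : Fin (n + 5))) := by
      have := (hadj g (some i) (some ⟨4 + n, by omega⟩)).mpr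
        (by simp only [adjInStar, Fin.val_mk]; omega)
      rwa [hend] at this
    have hm1 : multInStar n (ρ g (some i)) = 1 := by
      rw [hmult]; simp only [multInStar]; rw [if_neg (by omega)]
    simp only [Set.mem_insert_iff, Set.mem_singleton_iff]
    rcases h : ρ g (some i) with _ | j
    · exfalso; rw [h] at ha; simp [adjInStar] at ha
    · rw [h] at ha hm1
      simp [adjInStar] at ha
      have hj4 : ¬ 4 ≤ j.val := by
        intro hc
        simp only [multInStar, if_pos hc] at hm1
        omega
      have hj23 : j.val = 2 ∨ j.val = 3 := by
        have := j.isLt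
        omega
      rcases hj23 with hc | hc
      · left; exact congrArg some (Fin.ext (by simpa using hc))
      · right; exact congrArg some (Fin.ext (by simpa using hc))
  calc (Set.range fun g : G => ρ g (some i)).ncard
      ≤ ({some ⟨2, by omega⟩, some ⟨3, by omega⟩} :
          Set (Option (Fin (n + 5)))).ncard :=
        Set.ncard_le_ncard hsub ((Set.finite_singleton _).insert _)
    _ ≤ 2 := by
        refine le_trans (Set.ncard_insert_le _ _) ?_
        simp [Set.ncard_singleton]
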